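/- Let [a_1,...,a_n] = p_n/q_n and [a_2,...,a_n] = q_n/r_n (in lowest terms with the standard convergent recursions). Then the odd-length palindromic continued fraction satisfies [a_n,...,a_2,a_1,a_2,...,a_n] = (p_n² − r_n²)/(p_{n-1} p_n − r_{n-1} r_n), where p_{n-1}, r_{n-1} denote the corresponding penultimate convergent numerators. -/

import Mathlib

/-- Value of the continued fraction [a₁,...,aₙ] = a₁ + 1/(a₂ + 1/(... + 1/aₙ)). -/
def cfQ : List ℚ → ℚ
  | [] => 0
  | [a] => a
  | a :: b :: l => a + 1 / cfQ (b :: l)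

/-- The continuant: `cont [a₁,...,aₙ]` is the numerator N[a₁,...,aₙ] of the
continued fraction [a₁,...,aₙ], with N[] = 1. -/
def cont : List ℕ → ℕ
  | [] => 1
  | [a] => a
  | a :: b :: l => a * cont (b :: l) + cont l

/-- `contD [a₁,...,aₙ]` is the denominator of the continued fraction
[a₁,...,aₙ], i.e. N[a₂,...,aₙ], with the convention that the empty
continued fraction has denominator 0. -/
def contD : List ℕ → ℕ
  | [] => 0
  | _ :: l => cont l

def contA : List ℕ → ℕ
  | [] => 0
  | a :: l => cont ((a :: l).dropLast)

def contB : List ℕ → ℕ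
  | [] => 1
  | a :: l => contD ((a :: l).dropLast)

lemma cont_cons (a : ℕ) (l : List ℕ) : cont (a :: l) = a * cont l + contD l := by
  cases l <;> simp [cont, contD]

lemma contA_cons (a : ℕ) (l : List ℕ) : contA (a :: l) = a * contA l + contB l := by
  cases l with
  | nil => simp [contA, contB, cont]
  | cons b m =>
      show cont ((a :: b :: m).dropLast) = _
      rw [show (a :: b :: m).dropLast = a :: (b :: m).dropLast by simp]
      rw [cont_cons]
      rfl

lemma contB_cons (a : ℕ) (l : List ℕ) : contB (a :: l) = contA l := by
  cases l with
  | nil => simp [contA, contB, contD]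
  | cons b m =>
      show contD ((a :: b :: m).dropLast) = _
      rw [show (a :: b :: m).dropLast = a :: (b :: m).dropLast by simp]
      rfl

def Mm (l : List ℕ) : Matrix (Fin 2) (Fin 2) ℤ :=
  (l.map fun a => !![(a : ℤ), 1; 1, 0]).prod

lemma Mm_nil : Mm [] = 1 := rfl

lemma Mm_cons (a : ℕ) (l : List ℕ) : Mm (a :: l) = !![(a : ℤ), 1; 1, 0] * Mm l := by
  simp [Mm]

lemma Mm_eq (l : List ℕ) :
    Mm l = !![(cont l : ℤ), (contA l : ℤ); (contD l : ℤ), (contB l : ℤ)] := by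
  induction l with
  | nil => simp [Mm_nil, cont, contA, contD, contB, Matrix.one_fin_two]
  | cons a l ih =>
      rw [Mm_cons, ih, Matrix.mul_fin_two, cont_cons, contA_cons, contB_cons]
      show _ = !![_, _; (cont l : ℤ), (contA l : ℤ)]
      congr 1 <;> push_cast <;> ring

lemma Mm_append (l m : List ℕ) : Mm (l ++ m) = Mm l * Mm m := by
  simp [Mm, List.prod_append]

lemma A_symm (a : ℕ) : (!![(a : ℤ), 1; 1, 0]).transpose = !![(a : ℤ), 1; 1, 0] := by
  ext i j
  fin_cases i <;> fin_cases j <;> simp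

lemma Mm_reverse (l : List ℕ) : Mm l.reverse = (Mm l).transpose := by
  induction l with
  | nil => simp [Mm_nil]
  | cons a l ih =>
      have h1 : Mm [a] = !![(a : ℤ), 1; 1, 0] := by simp [Mm]
      rw [List.reverse_cons, Mm_append, ih, h1, Mm_cons, Matrix.transpose_mul, A_symm]

lemma Mm_det (l : List ℕ) : (Mm l).det = (-1) ^ l.length := by
  induction l with
  | nil => simp [Mm_nil]
  | cons a l ih =>
      rw [Mm_cons, Matrix.det_mul, ih, Matrix.det_fin_two_of]
      simp [pow_succ]

lemma cont_pos (l : List ℕ) (h : ∀ x ∈ l, 0 < x) : 0 < cont l := by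
  induction l with
  | nil => simp [cont]
  | cons a m ih =>
      rw [cont_cons]
      have ha : 0 < a := h a (by simp)
      have := ih (fun x hx => h x (by simp [hx]))
      positivity

lemma cfQ_cont (l : List ℕ) (hne : l ≠ []) (h : ∀ x ∈ l, 0 < x) :
    cfQ (l.map fun x => (x : ℚ)) = (cont l : ℚ) / (contD l : ℚ) := by
  induction l with
  | nil => simp at hne
  | cons a m ih =>
      cases m with
      | nil => simp [cfQ, cont, contD]
      | cons b t =>
          have hbt : ∀ x ∈ b :: t, 0 < x := fun x hx => h x (by simp [hx])
          have hnum : (0 : ℚ) < (cont (b :: t) : ℚ) := by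
            exact_mod_cast cont_pos _ hbt
          have hden : (0 : ℚ) < (contD (b :: t) : ℚ) := by
            have : contD (b :: t) = cont t := rfl
            rw [this]
            exact_mod_cast cont_pos t (fun x hx => hbt x (by simp [hx]))
          have key := ih (by simp) hbt
          show (a : ℚ) + 1 / cfQ ((b :: t).map fun x => (x : ℚ)) = _
          rw [key]
          have : cont (a :: b :: t) = a * cont (b :: t) + cont t := rfl
          rw [this]
          have h2 : contD (a :: b :: t) = cont (b :: t) := rfl
          rw [h2]
          have h3 : contD (b :: t) = cont t := rfl
          rw [h3] at *
          field_simp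
          push_cast
          rfl

lemma t2 (a b c d : ℤ) : (!![a, b; c, d]).transpose = !![a, c; b, d] := by
  ext i j
  fin_cases i <;> fin_cases j <;> simp

set_option maxHeartbeats 1000000 in
/-- If [a₁,...,aₙ] = pₙ/qₙ and [a₂,...,aₙ] = qₙ/rₙ then
[aₙ,...,a₂,a₁,a₂,...,aₙ] = (pₙ² − rₙ²)/(pₙ₋₁pₙ − rₙ₋₁rₙ).
Here pₙ = cont l, pₙ₋₁ = cont l.dropLast, rₙ = contD l.tail,
rₙ₋₁ = contD l.tail.dropLast. -/
theorem stmt6 (l : List ℕ) (hl : 2 ≤ l.length) (hpos : ∀ x ∈ l, 0 < x) :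
    cfQ ((l.reverse ++ l.tail).map (fun x => (x : ℚ))) =
      ((cont l : ℚ) ^ 2 - (contD l.tail : ℚ) ^ 2) /
        ((cont l.dropLast : ℚ) * (cont l : ℚ) -
          (contD l.tail.dropLast : ℚ) * (contD l.tail : ℚ)) := by
  match l, hl with
  | a :: b :: t, _ =>
  have hposT : ∀ x ∈ b :: t, 0 < x := fun x hx => hpos x (by simp [hx])
  have hposL : ∀ x ∈ (a :: b :: t).reverse ++ (b :: t), 0 < x := by
    intro x hx
    rcases List.mem_append.1 hx with h | h
    · exact hpos x (List.mem_reverse.1 h)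
    · exact hposT x h
  have hLne : (a :: b :: t).reverse ++ (b :: t) ≠ [] := by simp
  have hcf := cfQ_cont _ hLne hposL
  simp only [List.tail_cons]
  rw [hcf]
  -- matrix product
  have hML : Mm ((a :: b :: t).reverse ++ (b :: t)) =
      !![(cont (a::b::t) : ℤ), (contD (a::b::t) : ℤ);
         (contA (a::b::t) : ℤ), (contB (a::b::t) : ℤ)] *
      !![(cont (b::t) : ℤ), (contA (b::t) : ℤ);
         (contD (b::t) : ℤ), (contB (b::t) : ℤ)] := by
    rw [Mm_append, Mm_reverse, Mm_eq (a::b::t), Mm_eq (b::t), t2]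
  have hent := (Mm_eq ((a :: b :: t).reverse ++ (b :: t))).symm.trans hML
  rw [Matrix.mul_fin_two] at hent
  have e1 : (cont ((a :: b :: t).reverse ++ (b :: t)) : ℤ) =
      cont (a::b::t) * cont (b::t) + contD (a::b::t) * contD (b::t) := by
    have := congrArg (fun M => M 0 0) hent
    simpa using this
  have e2 : (contD ((a :: b :: t).reverse ++ (b :: t)) : ℤ) =
      contA (a::b::t) * cont (b::t) + contB (a::b::t) * contD (b::t) := by
    have := congrArg (fun M => M 1 0) hent
    simpa using this
  -- determinants
  have d1 : (cont (a::b::t) : ℤ) * contB (a::b::t) - contA (a::b::t) * contD (a::b::t)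
      = (-1) ^ (a::b::t).length := by
    have h := Mm_det (a::b::t)
    rw [Mm_eq, Matrix.det_fin_two_of] at h
    exact h
  have d2 : (cont (b::t) : ℤ) * contB (b::t) - contA (b::t) * contD (b::t)
      = (-1) ^ (b::t).length := by
    have h := Mm_det (b::t)
    rw [Mm_eq, Matrix.det_fin_two_of] at h
    exact h
  have hE : ((-1 : ℤ)) ^ (a::b::t).length = -(-1) ^ (b::t).length := by
    simp [List.length_cons, pow_succ]
  have hAB : (contA (b::t) : ℤ) = (contB (a::b::t) : ℤ) := by
    rw [contB_cons]
  have d12 : ((cont (a::b::t) : ℤ) * contB (a::b::t) - contA (a::b::t) * contD (a::b::t))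
      + ((cont (b::t) : ℤ) * contB (b::t) - contB (a::b::t) * contD (b::t)) = 0 := by
    linear_combination d1 + d2 + hE + (contD (b::t) : ℤ) * hAB
  -- contD (a::b::t) = cont (b::t)
  have hq : (contD (a::b::t) : ℤ) = (cont (b::t) : ℤ) := rfl
  rw [hq] at e1 d12
  -- key identity
  have hkey : (cont (b::t) : ℤ) *
        ((contA (a::b::t) : ℤ) * cont (a::b::t) - contB (b::t) * contD (b::t))
      = ((cont (a::b::t) : ℤ) - contD (b::t)) *
        ((contA (a::b::t) : ℤ) * cont (b::t) + contB (a::b::t) * contD (b::t)) := by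
    linear_combination (-(contD (b::t) : ℤ)) * d12
  -- positivity
  have hQpos : (0 : ℤ) < cont (b::t) := by exact_mod_cast cont_pos (b::t) hposT
  have hPApos : (0 : ℤ) < contA (a::b::t) := by
    have : contA (a::b::t) = cont ((a::b::t).dropLast) := rfl
    rw [this]
    exact_mod_cast cont_pos _ (fun x hx => hpos x ((List.dropLast_sublist _).subset hx))
  have hQBnn : (0 : ℤ) ≤ contB (a::b::t) := Int.natCast_nonneg _
  have hRnn : (0 : ℤ) ≤ contD (b::t) := Int.natCast_nonneg _
  have hSBnn : (0 : ℤ) ≤ contB (b::t) := Int.natCast_nonneg _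
  have hapos : (1 : ℤ) ≤ a := by exact_mod_cast hpos a (by simp)
  have hPR : (contD (b::t) : ℤ) < cont (a::b::t) := by
    have h := cont_cons a (b::t)
    have h' : (cont (a::b::t) : ℤ) = a * cont (b::t) + contD (b::t) := by exact_mod_cast h
    nlinarith
  have hY : (0 : ℤ) < (contA (a::b::t) : ℤ) * cont (b::t) + contB (a::b::t) * contD (b::t) := by
    nlinarith [mul_pos hPApos hQpos, mul_nonneg hQBnn hRnn]
  have hden2 : (0 : ℤ) < (contA (a::b::t) : ℤ) * cont (a::b::t) - contB (b::t) * contD (b::t) := by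
    have h0 : (0 : ℤ) < (cont (b::t) : ℤ) *
        ((contA (a::b::t) : ℤ) * cont (a::b::t) - contB (b::t) * contD (b::t)) := by
      rw [hkey]
      exact mul_pos (by linarith) hY
    by_contra hcon
    push_neg at hcon
    have h1 := mul_le_mul_of_nonneg_left hcon hQpos.le
    rw [mul_zero] at h1
    linarith
  -- rewrite goal into contA / contB form
  have g1 : cont ((a::b::t).dropLast) = contA (a::b::t) := rfl
  have g2 : contD ((b::t).dropLast) = contB (b::t) := rfl
  rw [g1, g2]
  have hden1Q : (contD ((a :: b :: t).reverse ++ (b :: t)) : ℚ) ≠ 0 := by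
    have : (0 : ℤ) < (contD ((a :: b :: t).reverse ++ (b :: t)) : ℤ) := by rw [e2]; exact hY
    exact_mod_cast this.ne'
  have hden2Q : ((contA (a::b::t) : ℚ) * (cont (a::b::t) : ℚ)
      - (contB (b::t) : ℚ) * (contD (b::t) : ℚ)) ≠ 0 := by
    have h' : ((contA (a::b::t) : ℚ) * (cont (a::b::t) : ℚ)
        - (contB (b::t) : ℚ) * (contD (b::t) : ℚ))
        = (((contA (a::b::t) : ℤ) * cont (a::b::t) - contB (b::t) * contD (b::t) : ℤ) : ℚ) := by
      push_cast; ring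
    rw [h']
    exact_mod_cast hden2.ne'
  rw [div_eq_div_iff hden1Q hden2Q]
  have final : (cont ((a :: b :: t).reverse ++ (b :: t)) : ℤ) *
        ((contA (a::b::t) : ℤ) * cont (a::b::t) - contB (b::t) * contD (b::t))
      = ((cont (a::b::t) : ℤ) ^ 2 - (contD (b::t) : ℤ) ^ 2) *
        (contD ((a :: b :: t).reverse ++ (b :: t)) : ℤ) := by
    rw [e1, e2]
    linear_combination ((cont (a::b::t) : ℤ) + (contD (b::t) : ℤ)) * hkey
  exact_mod_cast final
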